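/- After Alice's nonselective measurement {M_A(k)}_{k=±1} on the thermal state ρ of the XY Hamiltonian H, the average energy is E_A = Tr(H·Σ_k M_A(k)ρM_A(k)) = −B·sinh(βB)/Z − α·sinh(βα)/Z, so the energy injected by the measurement is ΔE_inf = E_A − Tr(Hρ) = B·sinh(βB)/Z + α·sinh(βα)/Z ≥ 0. -/

import Mathlib

open Matrix
open scoped Kronecker

noncomputable section

/-- Pauli matrices -/
def σx : Matrix (Fin 2) (Fin 2) ℂ := !![0, 1; 1, 0]
def σy : Matrix (Fin 2) (Fin 2) ℂ := !![0, -Complex.I; Complex.I, 0]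
def σz : Matrix (Fin 2) (Fin 2) ℂ := !![1, 0; 0, -1]

/-- Raising and lowering operators σ± = (σx ± i σy)/2 -/
def σp : Matrix (Fin 2) (Fin 2) ℂ := (2 : ℂ)⁻¹ • (σx + Complex.I • σy)
def σm : Matrix (Fin 2) (Fin 2) ℂ := (2 : ℂ)⁻¹ • (σx - Complex.I • σy)

/-- XY Hamiltonian H = (B/2)(σz⊗I + I⊗σz) + α(σ₊⊗σ₋ + σ₋⊗σ₊) -/
def Ham (B α : ℝ) : Matrix (Fin 2 × Fin 2) (Fin 2 × Fin 2) ℂ :=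
  ((B : ℂ) / 2) • (σz ⊗ₖ (1 : Matrix (Fin 2) (Fin 2) ℂ) + (1 : Matrix (Fin 2) (Fin 2) ℂ) ⊗ₖ σz)
    + (α : ℂ) • (σp ⊗ₖ σm + σm ⊗ₖ σp)

/-- Standard basis kets -/
def ket (a : Fin 2) : Fin 2 → ℂ := fun i => if i = a then 1 else 0
def ket2 (a b : Fin 2) : Fin 2 × Fin 2 → ℂ := fun p => ket a p.1 * ket b p.2

/-- Bell states (|01⟩ ± |10⟩)/√2 -/
def ψplus : Fin 2 × Fin 2 → ℂ := ((Real.sqrt 2 : ℂ))⁻¹ • (ket2 0 1 + ket2 1 0)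
def ψminus : Fin 2 × Fin 2 → ℂ := ((Real.sqrt 2 : ℂ))⁻¹ • (ket2 0 1 - ket2 1 0)

/-- Alice's measurement operators M_A(k) = ((I + k σx)/2) ⊗ I -/
def MA (k : ℝ) : Matrix (Fin 2 × Fin 2) (Fin 2 × Fin 2) ℂ :=
  ((2 : ℂ)⁻¹ • ((1 : Matrix (Fin 2) (Fin 2) ℂ) + (k : ℂ) • σx)) ⊗ₖ (1 : Matrix (Fin 2) (Fin 2) ℂ)

/-- Partition function Z = 2(cosh βα + cosh βB) -/
def Zf (β B α : ℝ) : ℝ := 2 * (Real.cosh (β * α) + Real.cosh (β * B))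

/-- Thermal state ρ = e^{-βH}/Z -/
def ρth (β B α : ℝ) : Matrix (Fin 2 × Fin 2) (Fin 2 × Fin 2) ℂ :=
  ((Zf β B α : ℂ))⁻¹ • NormedSpace.exp ((-(β : ℂ)) • Ham B α)

/-- Bob's local unitary U_B(θ,k) = cos θ · I + i k sin θ (I⊗σy) -/
def UB (θ k : ℝ) : Matrix (Fin 2 × Fin 2) (Fin 2 × Fin 2) ℂ :=
  (Real.cos θ : ℂ) • (1 : Matrix (Fin 2 × Fin 2) (Fin 2 × Fin 2) ℂ)
    + (Complex.I * k * Real.sin θ) • ((1 : Matrix (Fin 2) (Fin 2) ℂ) ⊗ₖ σy)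

end

noncomputable section

set_option maxHeartbeats 800000

def m4 (v : Matrix (Fin 4) (Fin 4) ℂ) : Matrix (Fin 2 × Fin 2) (Fin 2 × Fin 2) ℂ :=
  Matrix.of fun p q => v ⟨2*p.1.1+p.2.1, by omega⟩ ⟨2*q.1.1+q.2.1, by omega⟩

def Um : Matrix (Fin 2 × Fin 2) (Fin 2 × Fin 2) ℂ := m4 !![1,0,0,0; 0,1,1,0; 0,1,-1,0; 0,0,0,1]
def Wm : Matrix (Fin 2 × Fin 2) (Fin 2 × Fin 2) ℂ :=
  m4 !![1,0,0,0; 0,1/2,1/2,0; 0,1/2,-1/2,0; 0,0,0,1]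

lemma hUW : Um * Wm = 1 := by
  ext ⟨a,b⟩ ⟨c,d⟩
  fin_cases a <;> fin_cases b <;> fin_cases c <;> fin_cases d <;>
    simp [Um, Wm, m4, Matrix.mul_apply, Fintype.sum_prod_type, Fin.sum_univ_two,
      Matrix.one_apply] <;> norm_num [vecHead, vecTail, Prod.ext_iff]

def dvec (β B α : ℝ) : Fin 2 × Fin 2 → ℂ :=
  fun p => ((![-(β*B), -(β*α), β*α, β*B] ⟨2*p.1.1+p.2.1, by omega⟩ : ℝ) : ℂ)

lemma hdecomp (β B α : ℝ) : (-(β:ℂ)) • Ham B α = Um * Matrix.diagonal (dvec β B α) * Wm := by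
  ext ⟨a,b⟩ ⟨c,d⟩
  fin_cases a <;> fin_cases b <;> fin_cases c <;> fin_cases d <;>
    simp [Um, Wm, m4, dvec, Ham, σp, σm, σx, σy, σz, Matrix.mul_apply,
      Fintype.sum_prod_type, Fin.sum_univ_two, Matrix.diagonal_apply, Prod.ext_iff,
      Matrix.kroneckerMap_apply, Matrix.one_apply, vecHead, vecTail] <;> ring

def Emat (β B α : ℝ) : Matrix (Fin 2 × Fin 2) (Fin 2 × Fin 2) ℂ :=
  m4 !![(Real.exp (-(β*B)) : ℂ), 0, 0, 0;
        0, (Real.cosh (β*α) : ℂ), (-Real.sinh (β*α) : ℂ), 0;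
        0, (-Real.sinh (β*α) : ℂ), (Real.cosh (β*α) : ℂ), 0;
        0, 0, 0, (Real.exp (β*B) : ℂ)]

lemma Udiag_eq (β B α : ℝ) :
    Um * Matrix.diagonal (fun p => Complex.exp (dvec β B α p)) * Wm = Emat β B α := by
  ext ⟨a,b⟩ ⟨c,d⟩
  fin_cases a <;> fin_cases b <;> fin_cases c <;> fin_cases d <;>
    simp [Um, Wm, m4, dvec, Emat, Matrix.mul_apply,
      Fintype.sum_prod_type, Fin.sum_univ_two, Matrix.diagonal_apply, Prod.ext_iff,
      vecHead, vecTail, Real.cosh_eq, Real.sinh_eq, ← Complex.ofReal_exp] <;> ring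

lemma exp_eq_Emat (β B α : ℝ) :
    NormedSpace.exp ((-(β:ℂ)) • Ham B α) = Emat β B α := by
  have hinv : Um⁻¹ = Wm := Matrix.inv_eq_right_inv hUW
  rw [hdecomp, ← hinv,
    Matrix.exp_conj Um (Matrix.diagonal (dvec β B α))
      ((Matrix.isUnit_iff_isUnit_det Um).2 (Matrix.isUnit_det_of_right_inverse hUW)),
    Matrix.exp_diagonal, hinv]
  have hpe : NormedSpace.exp (dvec β B α) = fun p => Complex.exp (dvec β B α p) := by
    funext p; rw [Pi.coe_exp, ← Complex.exp_eq_exp_ℂ]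
  rw [hpe, Udiag_eq]

lemma trace2' (β B α : ℝ) :
    (Ham B α * Emat β B α).trace
      = ((-(2 * B * Real.sinh (β*B)) - 2 * α * Real.sinh (β*α) : ℝ) : ℂ) := by
  simp [Matrix.trace, Matrix.diag, Matrix.mul_apply, Fintype.sum_prod_type, Fin.sum_univ_two,
    Ham, Emat, m4, σp, σm, σx, σy, σz, Matrix.kroneckerMap_apply, Matrix.one_apply,
    vecHead, vecTail, Real.cosh_eq, Real.sinh_eq]
  ring

lemma trace1' (β B α : ℝ) :
    (Ham B α * (MA 1 * Emat β B α * MA 1 + MA (-1) * Emat β B α * MA (-1))).trace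
      = ((-(B * Real.sinh (β*B)) - α * Real.sinh (β*α) : ℝ) : ℂ) := by
  simp [Matrix.trace, Matrix.diag, Matrix.mul_apply, Fintype.sum_prod_type, Fin.sum_univ_two,
    Ham, Emat, MA, m4, σp, σm, σx, σy, σz, Matrix.kroneckerMap_apply, Matrix.one_apply,
    vecHead, vecTail, Real.cosh_eq, Real.sinh_eq]
  ring


/-- After Alice's nonselective measurement on the thermal state, the average energy is
    E_A = -B sinh(βB)/Z - α sinh(βα)/Z, so the injected energy
    ΔE = E_A - Tr(Hρ) = B sinh(βB)/Z + α sinh(βα)/Z is nonnegative. -/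
theorem energy_injected_by_measurement (β B α : ℝ) (hβ : 0 < β) (hB : 0 < B) (hα : 0 < α) :
    let Z : ℝ := Zf β B α
    let EA : ℂ := (Ham B α *
      (MA 1 * ρth β B α * MA 1 + MA (-1) * ρth β B α * MA (-1))).trace
    EA = ((-(B * Real.sinh (β * B) / Z) - α * Real.sinh (β * α) / Z : ℝ) : ℂ) ∧
    EA - (Ham B α * ρth β B α).trace
      = ((B * Real.sinh (β * B) / Z + α * Real.sinh (β * α) / Z : ℝ) : ℂ) ∧
    0 ≤ B * Real.sinh (β * B) / Z + α * Real.sinh (β * α) / Z := by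
  intro Z EA
  have hZpos : 0 < Zf β B α := by
    have h1 := Real.cosh_pos (β * α)
    have h2 := Real.cosh_pos (β * B)
    unfold Zf; linarith
  have hZ : (Zf β B α : ℝ) ≠ 0 := ne_of_gt hZpos
  have hρ : ρth β B α = ((Zf β B α : ℂ))⁻¹ • Emat β B α := by
    rw [ρth, exp_eq_Emat]
  have hEA : EA = ((Zf β B α : ℂ))⁻¹ *
      (Ham B α * (MA 1 * Emat β B α * MA 1 + MA (-1) * Emat β B α * MA (-1))).trace := by
    show (Ham B α * _).trace = _
    rw [hρ]
    simp [Matrix.mul_smul, Matrix.smul_mul, ← smul_add, Matrix.trace_smul, smul_eq_mul]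
  have h1 : EA = ((-(B * Real.sinh (β * B) / Z) - α * Real.sinh (β * α) / Z : ℝ) : ℂ) := by
    rw [hEA, trace1']
    show _ = ((-(B * Real.sinh (β * B) / Zf β B α) - α * Real.sinh (β * α) / Zf β B α : ℝ) : ℂ)
    push_cast
    field_simp
  refine ⟨h1, ?_, ?_⟩
  · have h2 : (Ham B α * ρth β B α).trace
        = ((Zf β B α : ℂ))⁻¹ *
          ((-(2 * B * Real.sinh (β*B)) - 2 * α * Real.sinh (β*α) : ℝ) : ℂ) := by
      rw [hρ, Matrix.mul_smul, Matrix.trace_smul, smul_eq_mul, trace2']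
    rw [h1, h2]
    show _ = ((B * Real.sinh (β * B) / Zf β B α + α * Real.sinh (β * α) / Zf β B α : ℝ) : ℂ)
    push_cast
    field_simp
    ring
  · have s1 : 0 ≤ Real.sinh (β * B) := (Real.sinh_pos_iff.2 (mul_pos hβ hB)).le
    have s2 : 0 ≤ Real.sinh (β * α) := (Real.sinh_pos_iff.2 (mul_pos hβ hα)).le
    have hzz : (0:ℝ) < Z := hZpos
    positivity


end
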